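/- arXiv:2111.09186 — 3 statements merged into one kernel-verified Lean document; each statement's English description precedes it below -/
import Mathlib

section
/- Fix m ≥ 1, α ∈ (0,1), and let P(ξ) = ξ₁^m, γ(x,t) = x + (t^α/1000, 0, ..., 0). For R ≥ 1 define f_R by f̂_R = χ_{Q_R} where Q_R = {ξ ∈ ℝⁿ : R ≤ ξ_i ≤ R+1, 1 ≤ i ≤ n}. If 1/m ≤ α < 1, set t₀ = R^{-m}/100. Then for every R large enough that (R+1)^m/R^m ≤ 2 and every x ∈ B(0, 1/1000), one has |∫_{Q_R} e^{i x·ξ}(i t₀^α ξ₁/1000 + i t₀ ξ₁^m) dξ| ≥ 1/200. -/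
open MeasureTheory

section Aux

open Set

private lemma weier {ι : Type*} (s : Finset ι) (f : ι → ℝ) (h0 : ∀ i ∈ s, 0 ≤ f i)
    (h1 : ∀ i ∈ s, f i ≤ 1) : 1 - ∑ i ∈ s, f i ≤ ∏ i ∈ s, (1 - f i) := by
  classical
  induction s using Finset.cons_induction with
  | empty => simp
  | cons a s ha ih =>
    rw [Finset.sum_cons, Finset.prod_cons]
    have hs0 : (0:ℝ) ≤ ∑ i ∈ s, f i :=
      Finset.sum_nonneg fun i hi => h0 i (Finset.mem_cons_of_mem hi)
    have ih' := ih (fun i hi => h0 i (Finset.mem_cons_of_mem hi))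
      (fun i hi => h1 i (Finset.mem_cons_of_mem hi))
    have ha0 : 0 ≤ f a := h0 a (Finset.mem_cons_self a s)
    have ha1 : f a ≤ 1 := h1 a (Finset.mem_cons_self a s)
    calc 1 - (f a + ∑ i ∈ s, f i) ≤ (1 - f a) * (1 - ∑ i ∈ s, f i) := by nlinarith
      _ ≤ (1 - f a) * ∏ i ∈ s, (1 - f i) := by
          exact mul_le_mul_of_nonneg_left ih' (by linarith)

private lemma core (R c b : ℝ) (φ : ℝ → ℝ) (hb : 0 ≤ b) (hc : c^2/2 ≤ 1)
    (hφ : ∀ t ∈ Icc R (R+1), b ≤ φ t) (hint : IntegrableOn φ (Icc R (R+1))) :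
    b * (1 - c^2/2) ≤ ‖∫ t in Icc R (R+1), Complex.exp (Complex.I * (c * (t - R))) * (φ t : ℂ)‖ := by
  have hmeas : MeasurableSet (Icc R (R+1)) := measurableSet_Icc
  set F : ℝ → ℂ := fun t => Complex.exp (Complex.I * (c * (t - R))) * (φ t : ℂ) with hF
  have hFint : IntegrableOn F (Icc R (R+1)) := by
    apply Integrable.bdd_mul (c := 1) (hint.ofReal)
    · exact (Complex.continuous_exp.comp (by continuity)).aestronglyMeasurable
    · refine ae_of_all _ fun t => ?_
      rw [mul_comm]
      simp [Complex.norm_exp]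
  have hre : ∀ t, (F t).re = Real.cos (c * (t - R)) * φ t := by
    intro t
    rw [hF]
    simp only [mul_comm Complex.I]
    rw [show ((c : ℂ) * ((t:ℂ) - (R:ℂ))) = ((c * (t - R) : ℝ) : ℂ) by push_cast; ring]
    rw [Complex.mul_re, Complex.ofReal_re, Complex.ofReal_im, mul_zero, sub_zero,
      Complex.exp_ofReal_mul_I_re]
  have h1 : (∫ t in Icc R (R+1), F t).re = ∫ t in Icc R (R+1), Real.cos (c * (t - R)) * φ t := by
    rw [show (∫ t in Icc R (R+1), F t).re = RCLike.re (K := ℂ) (∫ t in Icc R (R+1), F t) from rfl,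
      ← integral_re hFint]
    exact setIntegral_congr_fun hmeas (fun t _ => hre t)
  have h2 : b * (1 - c^2/2) ≤ ∫ t in Icc R (R+1), Real.cos (c * (t - R)) * φ t := by
    have hconst : b * (1 - c^2/2) = ∫ _t in Icc R (R+1), b * (1 - c^2/2) := by
      rw [setIntegral_const]
      simp [Real.volume_Icc]
    rw [hconst]
    apply setIntegral_mono_on
    · exact integrableOn_const (by simp [Real.volume_Icc])
    · apply Integrable.bdd_mul (c := 1) hint
      · exact (Real.continuous_cos.comp (by continuity)).aestronglyMeasurable
      · exact ae_of_all _ fun t => by simpa using Real.abs_cos_le_one _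
    · exact hmeas
    · intro t ht
      have h01 : 0 ≤ 1 - c^2/2 := by linarith
      have hcos : 1 - c^2/2 ≤ Real.cos (c * (t - R)) := by
        have := Real.one_sub_sq_div_two_le_cos (x := c * (t - R))
        have hsq : (c * (t - R))^2 ≤ c^2 := by
          have h1' : (t - R)^2 ≤ 1 := by nlinarith [ht.1, ht.2]
          nlinarith [sq_nonneg c]
        nlinarith
      calc b * (1 - c^2/2) ≤ φ t * Real.cos (c * (t - R)) := by
            nlinarith [hφ t ht, hcos, h01, hb]
        _ = _ := by ring
  calc b * (1 - c^2/2) ≤ (∫ t in Icc R (R+1), F t).re := by rw [h1]; exact h2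
    _ ≤ ‖∫ t in Icc R (R+1), F t‖ := Complex.re_le_norm _

private lemma fac_bound (R c b : ℝ) (u : ℂ) (hu : ‖u‖ = 1) (φ : ℝ → ℝ) (hb : 0 ≤ b)
    (hc : c^2/2 ≤ 1) (hφ : ∀ t ∈ Icc R (R+1), b ≤ φ t)
    (hint : IntegrableOn φ (Icc R (R+1))) :
    b * (1 - c^2/2) ≤ ‖∫ t in Icc R (R+1), Complex.exp (Complex.I * (c * t)) * (u * (φ t : ℂ))‖ := by
  have hpt : ∀ t : ℝ, Complex.exp (Complex.I * (c * t)) * (u * (φ t : ℂ)) =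
      (Complex.exp (Complex.I * (c * R)) * u) *
        (Complex.exp (Complex.I * (c * (t - R))) * (φ t : ℂ)) := by
    intro t
    rw [mul_mul_mul_comm, ← Complex.exp_add]
    congr 2
    push_cast
    ring
  simp_rw [hpt]
  rw [integral_const_mul, norm_mul, norm_mul, hu,
    show ‖Complex.exp (Complex.I * (c * R))‖ = 1 by
      rw [Complex.norm_exp]; simp,
    one_mul, one_mul]
  exact core R c b φ hb hc hφ hint

end Aux

theorem stmt_4 (n : ℕ) (m α R : ℝ) (hm : 1 ≤ m) (hα : 1/m ≤ α) (hα1 : α < 1)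
    (hR : 1 ≤ R) (hRm : (R+1) ^ m / R ^ m ≤ 2)
    (x : EuclideanSpace ℝ (Fin (n+1))) (hx : x ∈ Metric.ball (0 : EuclideanSpace ℝ (Fin (n+1))) (1/1000)) :
    (1:ℝ)/200 ≤
      ‖∫ ξ in {ξ : EuclideanSpace ℝ (Fin (n+1)) | ∀ i, R ≤ ξ i ∧ ξ i ≤ R + 1},
          Complex.exp (Complex.I * ((inner ℝ x ξ : ℝ) : ℂ)) *
            (Complex.I * (((R ^ (-m) / 100) ^ α * ξ 0 / 1000 +
              (R ^ (-m) / 100) * (ξ 0) ^ m : ℝ) : ℂ))‖ := by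
  classical
  have hR0 : (0:ℝ) < R := lt_of_lt_of_le one_pos hR
  set a : ℝ → ℝ := fun t => (R ^ (-m) / 100) ^ α * t / 1000 + (R ^ (-m) / 100) * t ^ m with ha
  set g : Fin (n+1) → ℝ → ℂ := fun i t =>
    Complex.exp (Complex.I * ((x i : ℝ) * t)) *
      (if i = 0 then Complex.I * (a t : ℂ) else 1) with hg
  set f : EuclideanSpace ℝ (Fin (n+1)) → ℂ := fun ξ =>
    Complex.exp (Complex.I * ((inner ℝ x ξ : ℝ) : ℂ)) * (Complex.I * (a (ξ 0) : ℂ)) with hf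
  set S : Set (EuclideanSpace ℝ (Fin (n+1))) :=
    {ξ : EuclideanSpace ℝ (Fin (n+1)) | ∀ i, R ≤ ξ i ∧ ξ i ≤ R + 1} with hS
  -- amplitude bounds
  have haLB : ∀ t ∈ Set.Icc R (R+1), (1:ℝ)/100 ≤ a t := by
    intro t ht
    have h1 : R ^ (-m) * R ^ m = 1 := by
      rw [← Real.rpow_add hR0, neg_add_cancel, Real.rpow_zero]
    have h2 : R ^ m ≤ t ^ m := Real.rpow_le_rpow hR0.le ht.1 (by linarith)
    have h3 : (0:ℝ) < R ^ (-m) := Real.rpow_pos_of_pos hR0 _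
    have h4 : (0:ℝ) ≤ (R ^ (-m) / 100) ^ α * t / 1000 := by
      have : (0:ℝ) ≤ (R ^ (-m) / 100) ^ α := Real.rpow_nonneg (by positivity) _
      have ht0 : (0:ℝ) ≤ t := le_trans (by linarith) ht.1
      positivity
    have h5 : (1:ℝ)/100 ≤ (R ^ (-m) / 100) * t ^ m := by
      calc (1:ℝ)/100 = (R ^ (-m) / 100) * R ^ m := by
            field_simp
            linarith [h1]
        _ ≤ (R ^ (-m) / 100) * t ^ m := by
            apply mul_le_mul_of_nonneg_left h2 (by positivity)
    rw [ha]
    dsimp only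
    linarith
  have haInt : IntegrableOn a (Set.Icc R (R+1)) := by
    apply Continuous.integrableOn_Icc
    have : Continuous fun t : ℝ => t ^ m := Real.continuous_rpow_const (by linarith)
    continuity
  -- measurability of S
  have hSm : MeasurableSet S := by
    have : S = (MeasurableEquiv.toLp 2 (Fin (n+1) → ℝ)).symm ⁻¹'
        (Set.univ.pi fun _ => Set.Icc R (R+1)) := by
      ext ξ
      simp only [Set.mem_preimage, Set.mem_univ_pi, Set.mem_Icc, hS, Set.mem_setOf_eq]
      exact Iff.rfl
    rw [this]
    exact (MeasurableEquiv.toLp 2 (Fin (n+1) → ℝ)).symm.measurable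
      (MeasurableSet.univ_pi fun _ => measurableSet_Icc)
  -- key factorization
  have key : ∫ ξ in S, f ξ = ∏ i, ∫ t in Set.Icc R (R+1), g i t := by
    rw [← integral_indicator hSm,
      ← ((EuclideanSpace.volume_preserving_symm_measurableEquiv_toLp (Fin (n+1))).symm).integral_comp']
    have hident : ∀ y : Fin (n+1) → ℝ,
        S.indicator f ((MeasurableEquiv.toLp 2 (Fin (n+1) → ℝ)).symm.symm y) =
          ∏ i, (Set.Icc R (R+1)).indicator (g i) (y i) := by
      intro y
      by_cases h : ∀ i, y i ∈ Set.Icc R (R+1)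
      · have hmem : (MeasurableEquiv.toLp 2 (Fin (n+1) → ℝ)).symm.symm y ∈ S := by
          intro i
          exact ⟨(h i).1, (h i).2⟩
        rw [Set.indicator_of_mem hmem]
        have : ∀ i : Fin (n+1), (Set.Icc R (R+1)).indicator (g i) (y i) = g i (y i) :=
          fun i => Set.indicator_of_mem (h i) _
        simp_rw [this]
        -- now show f (e.symm y) = ∏ i, g i (y i)
        rw [hf, hg]
        dsimp only
        have hinner : (inner ℝ x ((MeasurableEquiv.toLp 2 (Fin (n+1) → ℝ)).symm.symm y) : ℝ) =
            ∑ i, x i * y i := by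
          rw [PiLp.inner_apply]
          exact Finset.sum_congr rfl fun i _ => by simp [mul_comm]
        rw [hinner]
        rw [Finset.prod_mul_distrib]
        congr 1
        · rw [← Complex.exp_sum]
          congr 1
          push_cast
          rw [Finset.mul_sum]
        · rw [Finset.prod_ite_eq' Finset.univ (0 : Fin (n+1))
            (fun i => Complex.I * (a (y i) : ℂ))]
          simp only [Finset.mem_univ, if_true]
          rfl
      · push_neg at h
        obtain ⟨i, hi⟩ := h
        have hnmem : (MeasurableEquiv.toLp 2 (Fin (n+1) → ℝ)).symm.symm y ∉ S := by
          intro hmem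
          exact hi ⟨(hmem i).1, (hmem i).2⟩
        rw [Set.indicator_of_notMem hnmem]
        exact (Finset.prod_eq_zero (Finset.mem_univ i)
          (Set.indicator_of_notMem hi _)).symm
    simp_rw [hident]
    rw [integral_fintype_prod_volume_eq_prod (ι := Fin (n+1))
      (fun i => (Set.Icc R (R+1)).indicator (g i))]
    exact Finset.prod_congr rfl fun i _ => integral_indicator measurableSet_Icc
  -- coordinate bounds
  have hxnorm : ‖x‖ < 1/1000 := by simpa using hx
  have hsumsq : ∑ i, (x i)^2 < (1/1000)^2 := by
    have h1 : ‖x‖^2 = ∑ i, (x i)^2 := by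
      rw [EuclideanSpace.norm_eq, Real.sq_sqrt (Finset.sum_nonneg fun i _ => sq_nonneg _)]
      exact Finset.sum_congr rfl fun i _ => by rw [Real.norm_eq_abs, sq_abs]
    rw [← h1]
    have h0 : (0:ℝ) ≤ ‖x‖ := norm_nonneg _
    nlinarith
  have hxi : ∀ i, (x i)^2 ≤ (1/1000)^2 := by
    intro i
    have : (x i)^2 ≤ ∑ j, (x j)^2 :=
      Finset.single_le_sum (fun j _ => sq_nonneg (x j)) (Finset.mem_univ i)
    linarith
  -- per-factor lower bounds
  set c : Fin (n+1) → ℝ := fun i => (if i = 0 then (1:ℝ)/100 else 1) * (1 - (x i)^2/2) with hc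
  have hxc2 : ∀ i : Fin (n+1), (x i)^2/2 ≤ 1 := fun i => by nlinarith [hxi i]
  have hfac : ∀ i : Fin (n+1), c i ≤ ‖∫ t in Set.Icc R (R+1), g i t‖ := by
    intro i
    by_cases h0 : i = 0
    · subst h0
      have heq : (∫ t in Set.Icc R (R+1), g 0 t) =
          ∫ t in Set.Icc R (R+1),
            Complex.exp (Complex.I * ((x 0 : ℝ) * (t:ℝ))) * (Complex.I * ((a t : ℝ) : ℂ)) := by
        apply setIntegral_congr_fun measurableSet_Icc
        intro t _
        simp [hg]
      rw [heq]
      have hb := fac_bound R (x 0) (1/100) Complex.I (by simp) a (by norm_num)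
        (hxc2 0) haLB haInt
      have hcv : c 0 = 1/100 * (1 - (x 0)^2/2) := by simp [hc]
      rw [hcv]
      exact hb
    · have heq : (∫ t in Set.Icc R (R+1), g i t) =
          ∫ t in Set.Icc R (R+1),
            Complex.exp (Complex.I * ((x i : ℝ) * (t:ℝ))) * ((1:ℂ) * (((1:ℝ) : ℝ) : ℂ)) := by
        apply setIntegral_congr_fun measurableSet_Icc
        intro t _
        simp [hg, h0]
      rw [heq]
      have hb := fac_bound R (x i) 1 1 (by simp) (fun _ => (1:ℝ)) (by norm_num)
        (hxc2 i) (fun t _ => le_refl 1)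
        (integrableOn_const (by simp [Real.volume_Icc]))
      have hcv : c i = 1 * (1 - (x i)^2/2) := by simp [hc, h0]
      rw [hcv]
      exact hb
  have hcnn : ∀ i : Fin (n+1), 0 ≤ c i := by
    intro i
    rw [hc]
    have := hxc2 i
    have h2 : (0:ℝ) ≤ 1 - (x i)^2/2 := by nlinarith [hxi i]
    by_cases h0 : i = 0 <;> simp [h0] <;> nlinarith [hxi 0, hxi i]
  -- assemble
  have hprod : ∏ i, c i ≤ ∏ i, ‖∫ t in Set.Icc R (R+1), g i t‖ :=
    Finset.prod_le_prod (fun i _ => hcnn i) (fun i _ => hfac i)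
  have hcval : (1:ℝ)/200 ≤ ∏ i, c i := by
    rw [hc]
    rw [Finset.prod_mul_distrib]
    have h1 : (∏ i : Fin (n+1), if i = 0 then (1:ℝ)/100 else 1) = 1/100 := by
      rw [Finset.prod_ite_eq' Finset.univ (0 : Fin (n+1)) (fun _ => (1:ℝ)/100)]
      simp
    rw [h1]
    have h2 : 1 - ∑ i, (x i)^2/2 ≤ ∏ i : Fin (n+1), (1 - (x i)^2/2) :=
      weier Finset.univ (fun i => (x i)^2/2) (fun i _ => by positivity)
        (fun i _ => hxc2 i)
    have h3 : ∑ i, (x i)^2/2 ≤ (1/1000)^2/2 := by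
      rw [← Finset.sum_div]
      linarith [hsumsq]
    nlinarith [h2, h3]
  calc (1:ℝ)/200 ≤ ∏ i, c i := hcval
    _ ≤ ∏ i, ‖∫ t in Set.Icc R (R+1), g i t‖ := hprod
    _ = ‖∏ i, ∫ t in Set.Icc R (R+1), g i t‖ := (norm_prod _ _).symm
    _ = ‖∫ ξ in S, f ξ‖ := by rw [key]
end

section
/- (Schur-type estimate) Let 0 < α ≤ 1/4, λ ≥ 2, and let g ∈ L²(ℝ) be supported in a ball B(x₀, r). Then ∫∫_{{(x,y): c λ^{-2α} ≤ |x-y| < λ^{-α/(1-α)}}} |g(x)||g(y)| |x-y|^{-1/(2α)} dx dy ≤ C λ^{1-2α} ‖g‖²_{L²}, where C depends only on c and α. -/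
open MeasureTheory Set

lemma half_lintegral {P a : ℝ} (hP : 1 < P) (ha : 0 < a) :
    ∫⁻ t in Set.Ici a, ENNReal.ofReal (|t| ^ (-P)) = ENNReal.ofReal (a ^ (1 - P) / (P - 1)) := by
  have h1 : ∫⁻ t in Set.Ici a, ENNReal.ofReal (|t| ^ (-P))
      = ∫⁻ t in Set.Ioi a, ENNReal.ofReal (t ^ (-P)) := by
    rw [← Measure.restrict_congr_set Ioi_ae_eq_Ici]
    refine setLIntegral_congr_fun measurableSet_Ioi (fun t ht => ?_)
    rw [abs_of_pos (ha.trans ht)]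
  rw [h1, ← ofReal_integral_eq_lintegral_ofReal
      (integrableOn_Ioi_rpow_of_lt (by linarith) ha)
      ((ae_restrict_iff' measurableSet_Ioi).2 (ae_of_all _ fun t ht =>
        Real.rpow_nonneg (le_of_lt (ha.trans ht)) _)),
    integral_Ioi_rpow_of_lt (by linarith) ha]
  congr 1
  rw [show -P + 1 = 1 - P by ring, show (1 - P : ℝ) = -(P - 1) by ring, div_neg, neg_div, neg_neg]

lemma kernel_bound {P a : ℝ} (hP : 1 < P) (ha : 0 < a) (x : ℝ) :
    ∫⁻ y in {y : ℝ | a ≤ |x - y|}, ENNReal.ofReal (|x - y| ^ (-P))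
      ≤ ENNReal.ofReal (2 * (a ^ (1 - P) / (P - 1))) := by
  have hfm' : Measurable fun t : ℝ => ENNReal.ofReal (|t| ^ (-P)) :=
    ENNReal.measurable_ofReal.comp ((measurable_id.abs).pow_const (-P))
  have hfm : Measurable fun y : ℝ => ENNReal.ofReal (|x - y| ^ (-P)) :=
    hfm'.comp (measurable_id'.const_sub x)
  have hset : MeasurableSet {y : ℝ | a ≤ |x - y|} :=
    measurableSet_le measurable_const ((measurable_id'.const_sub x).abs)
  have hmap : Measure.map (fun t : ℝ => x - t) volume = volume :=
    Measure.map_sub_left_eq_self volume x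
  have step1 : ∫⁻ y in {y : ℝ | a ≤ |x - y|}, ENNReal.ofReal (|x - y| ^ (-P))
      = ∫⁻ t in {t : ℝ | a ≤ |t|}, ENNReal.ofReal (|t| ^ (-P)) := by
    conv_lhs => rw [← hmap]
    rw [setLIntegral_map hset hfm (measurable_id'.const_sub x)]
    have hpre : (fun t : ℝ => x - t) ⁻¹' {y : ℝ | a ≤ |x - y|} = {t : ℝ | a ≤ |t|} := by
      ext t; simp [sub_sub_cancel]
    rw [hpre]
    simp [sub_sub_cancel]
  rw [step1]
  have hsplit : {t : ℝ | a ≤ |t|} = Set.Iic (-a) ∪ Set.Ici a := by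
    ext t
    simp only [Set.mem_setOf_eq, Set.mem_union, Set.mem_Iic, Set.mem_Ici, le_abs]
    constructor
    · rintro (h | h); · right; exact h
      · left; linarith
    · rintro (h | h); · right; linarith
      · left; exact h
  have hdisj : Disjoint (Set.Iic (-a)) (Set.Ici a) := by
    rw [Set.disjoint_left]
    intro t h1 h2
    simp only [Set.mem_Iic, Set.mem_Ici] at h1 h2
    linarith
  rw [hsplit, lintegral_union measurableSet_Ici hdisj]
  have hneg : ∫⁻ t in Set.Iic (-a), ENNReal.ofReal (|t| ^ (-P))
      = ∫⁻ t in Set.Ici a, ENNReal.ofReal (|t| ^ (-P)) := by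
    conv_lhs => rw [← Measure.map_neg_eq_self (volume : Measure ℝ)]
    rw [setLIntegral_map measurableSet_Iic hfm' measurable_neg]
    have hpre : (Neg.neg : ℝ → ℝ) ⁻¹' Set.Iic (-a) = Set.Ici a := by
      ext t; simp
    rw [hpre]
    simp [abs_neg]
  rw [hneg, half_lintegral hP ha]
  have hXnn : 0 ≤ a ^ (1 - P) / (P - 1) :=
    div_nonneg (Real.rpow_nonneg ha.le _) (by linarith)
  rw [two_mul, ENNReal.ofReal_add hXnn hXnn]

theorem stmt_9 (c α : ℝ) (hc : 0 < c) (hα : 0 < α) (hα4 : α ≤ 1/4) :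
    ∃ C > 0, ∀ lam : ℝ, 2 ≤ lam → ∀ (g : ℝ → ℂ) (x₀ r : ℝ),
      Function.support g ⊆ Metric.ball x₀ r →
      MemLp g 2 volume →
      (∫ p in {p : ℝ × ℝ | c * lam ^ (-(2*α)) ≤ |p.1 - p.2| ∧
            |p.1 - p.2| < lam ^ (-(α/(1-α)))},
          ‖g p.1‖ * ‖g p.2‖ * |p.1 - p.2| ^ (-(1/(2*α))))
        ≤ C * lam ^ (1 - 2*α) * ∫ x, ‖g x‖^2 := by
  have h2α : 0 < 2*α := by linarith
  set P : ℝ := 1/(2*α) with hPdef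
  have hP2 : (2:ℝ) ≤ P := by
    rw [hPdef, le_div_iff₀ h2α]; linarith
  have hP1 : (1:ℝ) < P := by linarith
  have hCpos : 0 < 2 * (c ^ (1 - P) / (P - 1)) := by
    have : 0 < c ^ (1 - P) := Real.rpow_pos_of_pos hc _
    have : 0 < P - 1 := by linarith
    positivity
  refine ⟨2 * (c ^ (1 - P) / (P - 1)), hCpos, ?_⟩
  intro lam hlam g x₀ r hsupp hg
  set D : ℝ := ∫ x, ‖g x‖^2 with hDdef
  have hD : 0 ≤ D := integral_nonneg fun x => by positivity
  have hlam0 : (0:ℝ) < lam := by linarith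
  have hRHS : 0 ≤ 2 * (c ^ (1 - P) / (P - 1)) * lam ^ (1 - 2*α) * D :=
    mul_nonneg (mul_nonneg hCpos.le (Real.rpow_nonneg hlam0.le _)) hD
  set a : ℝ := c * lam ^ (-(2*α)) with hadef
  set b : ℝ := lam ^ (-(α/(1-α))) with hbdef
  have ha : 0 < a := by
    have := Real.rpow_pos_of_pos hlam0 (-(2*α))
    positivity
  set S : Set (ℝ × ℝ) := {p : ℝ × ℝ | a ≤ |p.1 - p.2| ∧ |p.1 - p.2| < b} with hSdef
  have hS : MeasurableSet S := by
    have : S = (fun p : ℝ × ℝ => |p.1 - p.2|) ⁻¹' (Set.Ico a b) := rfl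
    rw [this]
    exact ((continuous_fst.sub continuous_snd).abs.measurable) measurableSet_Ico
  set F : ℝ × ℝ → ℝ := fun p => ‖g p.1‖ * ‖g p.2‖ * |p.1 - p.2| ^ (-P) with hFdef
  set M : ℝ := 2 * (a ^ (1 - P) / (P - 1)) with hMdef
  have hMC : M = 2 * (c ^ (1 - P) / (P - 1)) * lam ^ (1 - 2*α) := by
    have hexp : (-(2*α)) * (1 - P) = 1 - 2*α := by
      rw [hPdef]; field_simp; ring
    have h1 : a ^ (1 - P) = c ^ (1 - P) * lam ^ (1 - 2*α) := by
      rw [hadef, Real.mul_rpow hc.le (Real.rpow_nonneg hlam0.le _),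
        ← Real.rpow_mul hlam0.le, hexp]
    rw [hMdef, h1]; ring
  -- measurability infrastructure
  have hgm : AEStronglyMeasurable g volume := hg.aestronglyMeasurable
  set K : ℝ × ℝ → ENNReal := fun p => ENNReal.ofReal (|p.1 - p.2| ^ (-P)) with hKdef
  have hK : Measurable K :=
    ENNReal.measurable_ofReal.comp (((measurable_fst.sub measurable_snd).abs).pow_const (-P))
  set f1 : ℝ × ℝ → ENNReal := fun p => ENNReal.ofReal (‖g p.1‖^2) * K p with hf1def
  set f2 : ℝ × ℝ → ENNReal := fun p => ENNReal.ofReal (‖g p.2‖^2) * K p with hf2def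
  have hnorm2 : AEStronglyMeasurable (fun x => ‖g x‖^2) volume :=
    (hgm.norm.aemeasurable.pow_const 2).aestronglyMeasurable
  have hn1base : AEMeasurable (fun x => ENNReal.ofReal (‖g x‖^2)) volume :=
    ENNReal.measurable_ofReal.comp_aemeasurable hnorm2.aemeasurable
  have hn1 : AEMeasurable (fun p : ℝ × ℝ => ENNReal.ofReal (‖g p.1‖^2)) (volume.prod volume) :=
    ENNReal.measurable_ofReal.comp_aemeasurable hnorm2.aemeasurable.comp_fst
  have hn2 : AEMeasurable (fun p : ℝ × ℝ => ENNReal.ofReal (‖g p.2‖^2)) (volume.prod volume) :=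
    ENNReal.measurable_ofReal.comp_aemeasurable hnorm2.aemeasurable.comp_snd
  have hf1m : AEMeasurable (S.indicator f1) (volume.prod volume) :=
    (hn1.mul hK.aemeasurable).indicator hS
  have hf2m : AEMeasurable (S.indicator f2) (volume.prod volume) :=
    (hn2.mul hK.aemeasurable).indicator hS
  have hInt2 : Integrable (fun x => ‖g x‖^2) volume :=
    (memLp_two_iff_integrable_sq_norm hgm).1 hg
  have hDlint : ∫⁻ x, ENNReal.ofReal (‖g x‖^2) = ENNReal.ofReal D :=
    (ofReal_integral_eq_lintegral_ofReal hInt2 (ae_of_all _ fun x => by positivity)).symm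
  -- term 1 bound
  have hterm1 : ∫⁻ p, S.indicator f1 p ∂(volume.prod volume)
      ≤ ENNReal.ofReal D * ENNReal.ofReal M := by
    rw [lintegral_prod _ hf1m]
    calc ∫⁻ x, ∫⁻ y, S.indicator f1 (x, y)
        ≤ ∫⁻ x, ENNReal.ofReal (‖g x‖^2) * ENNReal.ofReal M := by
          refine lintegral_mono fun x => ?_
          have hsetx : MeasurableSet {y : ℝ | a ≤ |x - y|} :=
            measurableSet_le measurable_const ((measurable_id'.const_sub x).abs)
          calc ∫⁻ y, S.indicator f1 (x, y)
              ≤ ∫⁻ y, ({y : ℝ | a ≤ |x - y|}).indicator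
                  (fun y => ENNReal.ofReal (‖g x‖^2) * ENNReal.ofReal (|x - y| ^ (-P))) y := by
                refine lintegral_mono fun y => ?_
                by_cases h : (x, y) ∈ S
                · have hy : y ∈ {y : ℝ | a ≤ |x - y|} := h.1
                  rw [Set.indicator_of_mem h, Set.indicator_of_mem hy]
                · rw [Set.indicator_of_notMem h]; exact zero_le
            _ = ENNReal.ofReal (‖g x‖^2)
                  * ∫⁻ y in {y : ℝ | a ≤ |x - y|}, ENNReal.ofReal (|x - y| ^ (-P)) := by
                rw [lintegral_indicator hsetx, lintegral_const_mul' _ _ ENNReal.ofReal_ne_top]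
            _ ≤ _ := mul_le_mul_right (kernel_bound hP1 ha x) _
      _ = ENNReal.ofReal D * ENNReal.ofReal M := by
          rw [lintegral_mul_const'' _ hn1base, hDlint]
  -- term 2 equals term 1 by symmetry
  have hswap : ∀ z : ℝ × ℝ, S.indicator f1 z.swap = S.indicator f2 z := by
    intro z
    have hmem : z.swap ∈ S ↔ z ∈ S := by
      simp only [hSdef, Set.mem_setOf_eq, Prod.fst_swap, Prod.snd_swap, abs_sub_comm z.2 z.1]
    by_cases h : z ∈ S
    · rw [Set.indicator_of_mem (hmem.2 h), Set.indicator_of_mem h]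
      simp only [hf1def, hf2def, hKdef, Prod.fst_swap, Prod.snd_swap, abs_sub_comm z.2 z.1]
    · rw [Set.indicator_of_notMem (fun hh => h (hmem.1 hh)), Set.indicator_of_notMem h]
  have hterm2 : ∫⁻ p, S.indicator f2 p ∂(volume.prod volume)
      = ∫⁻ p, S.indicator f1 p ∂(volume.prod volume) := by
    rw [← lintegral_prod_swap (S.indicator f1)]
    exact lintegral_congr fun z => (hswap z).symm
  -- pointwise AM-GM
  have hptwise : ∀ p : ℝ × ℝ, S.indicator (fun p => ENNReal.ofReal (F p)) p
      ≤ (S.indicator f1 p + S.indicator f2 p) / 2 := by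
    intro p
    by_cases h : p ∈ S
    · rw [Set.indicator_of_mem h, Set.indicator_of_mem h, Set.indicator_of_mem h]
      have hk : 0 ≤ |p.1 - p.2| ^ (-P) := Real.rpow_nonneg (abs_nonneg _) _
      have hreal : F p ≤ (‖g p.1‖^2 * (|p.1 - p.2| ^ (-P)) + ‖g p.2‖^2 * (|p.1 - p.2| ^ (-P))) / 2 := by
        have huv : ‖g p.1‖ * ‖g p.2‖ ≤ (‖g p.1‖^2 + ‖g p.2‖^2)/2 := by
          nlinarith [sq_nonneg (‖g p.1‖ - ‖g p.2‖)]
        calc F p = (‖g p.1‖ * ‖g p.2‖) * |p.1 - p.2| ^ (-P) := rfl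
          _ ≤ ((‖g p.1‖^2 + ‖g p.2‖^2)/2) * |p.1 - p.2| ^ (-P) :=
              mul_le_mul_of_nonneg_right huv hk
          _ = _ := by ring
      calc ENNReal.ofReal (F p)
          ≤ ENNReal.ofReal ((‖g p.1‖^2 * (|p.1 - p.2| ^ (-P))
              + ‖g p.2‖^2 * (|p.1 - p.2| ^ (-P))) / 2) := ENNReal.ofReal_le_ofReal hreal
        _ = (ENNReal.ofReal (‖g p.1‖^2 * (|p.1 - p.2| ^ (-P)))
              + ENNReal.ofReal (‖g p.2‖^2 * (|p.1 - p.2| ^ (-P)))) / 2 := by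
            rw [ENNReal.ofReal_div_of_pos two_pos,
              ENNReal.ofReal_add (by positivity) (by positivity), ENNReal.ofReal_ofNat]
        _ = (f1 p + f2 p) / 2 := by
            rw [ENNReal.ofReal_mul (sq_nonneg _), ENNReal.ofReal_mul (sq_nonneg _)]
    · simp [Set.indicator_of_notMem h]
  -- main lintegral bound
  have hmain : ∫⁻ p in S, ENNReal.ofReal (F p)
      ≤ ENNReal.ofReal (2 * (c ^ (1 - P) / (P - 1)) * lam ^ (1 - 2*α) * D) := by
    calc ∫⁻ p in S, ENNReal.ofReal (F p)
        = ∫⁻ p, S.indicator (fun p => ENNReal.ofReal (F p)) p := (lintegral_indicator hS _).symm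
      _ ≤ ∫⁻ p, (S.indicator f1 p + S.indicator f2 p) / 2 := lintegral_mono hptwise
      _ = (∫⁻ p, (S.indicator f1 p + S.indicator f2 p)) / 2 := by
          simp_rw [div_eq_mul_inv]
          rw [lintegral_mul_const' _ _ (by simp : (2:ENNReal)⁻¹ ≠ ⊤)]
      _ = (∫⁻ p, (S.indicator f1 p + S.indicator f2 p) ∂(volume.prod volume)) / 2 := by
          rw [← Measure.volume_eq_prod]
      _ = ((∫⁻ p, S.indicator f1 p ∂(volume.prod volume))
            + ∫⁻ p, S.indicator f2 p ∂(volume.prod volume)) / 2 := by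
          rw [lintegral_add_left' hf1m]
      _ = ∫⁻ p, S.indicator f1 p ∂(volume.prod volume) := by
          rw [hterm2, ← two_mul, mul_comm, mul_div_assoc,
            ENNReal.div_self two_ne_zero ENNReal.ofNat_ne_top, mul_one]
      _ ≤ ENNReal.ofReal D * ENNReal.ofReal M := hterm1
      _ = ENNReal.ofReal (2 * (c ^ (1 - P) / (P - 1)) * lam ^ (1 - 2*α) * D) := by
          rw [← ENNReal.ofReal_mul hD, hMC]; ring_nf
  -- conclude
  by_cases hInt : IntegrableOn F S volume
  · rw [show (∫ p in S, ‖g p.1‖ * ‖g p.2‖ * |p.1 - p.2| ^ (-P)) = ∫ p in S, F p from rfl,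
      integral_eq_lintegral_of_nonneg_ae
        (ae_of_all _ fun p => mul_nonneg (mul_nonneg (norm_nonneg _) (norm_nonneg _))
          (Real.rpow_nonneg (abs_nonneg _) _))
        hInt.aestronglyMeasurable]
    exact ENNReal.toReal_le_of_le_ofReal hRHS hmain
  · rw [integral_undef hInt]
    exact hRHS
end

section
/- Suppose that for γ(x,t) = x + t^α (with α ∈ [1/2,1)) and some p ≥ 1 and all f ∈ H^s(ℝ), ‖sup_{t∈(0,1)} |e^{itΔ}f(γ(x,t))|‖_{L^p(B(0,1))} ≤ C ‖f‖_{H^s(ℝ)}. If this holds for every s > 1/4, then p ≤ 4. -/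
open MeasureTheory Real Set Complex

noncomputable section
namespace S13

def J (R a t : ℝ) : ℂ :=
  ∫ ξ, Complex.exp (Complex.I * ((a * ξ + t * ξ ^ 2 : ℝ) : ℂ)) *
    (Set.Ioc (0:ℝ) R).indicator (fun _ => (1:ℂ)) ξ

lemma norm_exp_I_mul (r : ℝ) : ‖Complex.exp (Complex.I * (r:ℂ))‖ = 1 := by
  rw [Complex.norm_exp]; simp

lemma cont_exp (a t : ℝ) : Continuous fun ξ : ℝ =>
    Complex.exp (Complex.I * ((a * ξ + t * ξ ^ 2 : ℝ) : ℂ)) := by fun_prop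

lemma J_eq (R a t : ℝ) :
    J R a t = ∫ ξ in Set.Ioc (0:ℝ) R, Complex.exp (Complex.I * ((a * ξ + t * ξ ^ 2 : ℝ) : ℂ)) := by
  rw [J, ← integral_indicator measurableSet_Ioc]
  congr 1; ext ξ
  by_cases h : ξ ∈ Set.Ioc (0:ℝ) R <;> simp [h]

lemma J_norm_le (R a t : ℝ) (hR : 0 ≤ R) : ‖J R a t‖ ≤ R := by
  rw [J_eq]
  have := norm_setIntegral_le_of_norm_le_const_ae' (μ := volume) (s := Set.Ioc (0:ℝ) R)
    (C := 1) (by simp [Real.volume_Ioc])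
    (f := fun ξ => Complex.exp (Complex.I * ((a * ξ + t * ξ ^ 2 : ℝ) : ℂ)))
    (Filter.Eventually.of_forall fun ξ _ => le_of_eq (norm_exp_I_mul _))
  calc ‖∫ ξ in Set.Ioc (0:ℝ) R, Complex.exp (Complex.I * ((a * ξ + t * ξ ^ 2 : ℝ) : ℂ))‖
      ≤ 1 * (volume (Set.Ioc (0:ℝ) R)).toReal := this
    _ = R := by simp [Real.volume_Ioc, hR]

lemma J_re_ge (R a t : ℝ) (hR : 0 ≤ R)
    (hb : ∀ ξ ∈ Set.Ioc (0:ℝ) R, |a * ξ + t * ξ ^ 2| ≤ π / 3) :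
    R / 2 ≤ (J R a t).re := by
  rw [J_eq]
  have hint : IntegrableOn (fun ξ : ℝ =>
      Complex.exp (Complex.I * ((a * ξ + t * ξ ^ 2 : ℝ) : ℂ))) (Set.Ioc 0 R) volume :=
    (cont_exp a t).integrableOn_Ioc
  have hre := integral_re hint
  simp only [RCLike.re_eq_complex_re] at hre
  rw [← hre]
  have hcos : ∀ ξ ∈ Set.Ioc (0:ℝ) R,
      (1:ℝ)/2 ≤ (Complex.exp (Complex.I * ((a * ξ + t * ξ ^ 2 : ℝ) : ℂ))).re := by
    intro ξ hξ
    have he : (Complex.exp (Complex.I * ((a * ξ + t * ξ ^ 2 : ℝ) : ℂ))).re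
        = Real.cos (a * ξ + t * ξ ^ 2) := by
      rw [mul_comm, Complex.exp_ofReal_mul_I_re]
    rw [he]
    have h1 : Real.cos (a * ξ + t * ξ ^ 2) = Real.cos (|a * ξ + t * ξ ^ 2|) :=
      (Real.cos_abs _).symm
    rw [h1, ← Real.cos_pi_div_three]
    exact Real.cos_le_cos_of_nonneg_of_le_pi (abs_nonneg _)
      (by linarith [Real.pi_pos]) (hb ξ hξ)
  calc R / 2 = ∫ _ξ in Set.Ioc (0:ℝ) R, (1/2 : ℝ) := by
        simp [Real.volume_Ioc, ENNReal.toReal_ofReal hR]; rw [max_eq_left hR]; ring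
    _ ≤ ∫ ξ in Set.Ioc (0:ℝ) R,
          (Complex.exp (Complex.I * ((a * ξ + t * ξ ^ 2 : ℝ) : ℂ))).re := by
        apply setIntegral_mono_on (integrableOn_const (by simp [Real.volume_Ioc]))
          (hint.re) measurableSet_Ioc hcos

lemma J_cont (R t : ℝ) : Continuous fun a => J R a t := by
  apply continuous_of_dominated (bound := (Set.Ioc (0:ℝ) R).indicator (fun _ => (1:ℝ)))
  · intro a
    exact ((cont_exp a t).aestronglyMeasurable.mul
      ((stronglyMeasurable_const.indicator measurableSet_Ioc).aestronglyMeasurable))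
  · intro a
    filter_upwards with ξ
    rw [norm_mul, norm_exp_I_mul, one_mul]
    by_cases h : ξ ∈ Set.Ioc (0:ℝ) R <;> simp [h]
  · exact (integrable_indicator_iff measurableSet_Ioc).2
      (integrableOn_const (by simp [Real.volume_Ioc]))
  · filter_upwards with ξ
    apply Continuous.mul _ continuous_const
    fun_prop

lemma measurable_h (R alp : ℝ) (hR : 0 ≤ R) :
    Measurable fun x : ℝ => ⨆ t : Set.Ioo (0:ℝ) 1, ‖J R (x + (t:ℝ) ^ alp) t‖ := by
  haveI : Nonempty (Set.Ioo (0:ℝ) 1) := ⟨⟨1/2, by norm_num⟩⟩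
  apply LowerSemicontinuous.measurable
  apply lowerSemicontinuous_ciSup
  · intro x
    refine ⟨R, ?_⟩
    rintro y ⟨t, rfl⟩
    exact J_norm_le R _ t hR
  · intro t
    exact (((J_cont R t).comp (continuous_id.add continuous_const)).norm).lowerSemicontinuous

lemma final (p s C : ℝ) (hp4 : 4 < p) (hs : s = 3/8 - 1/(2*p)) (hC : 0 < C)
    (H : ∀ R : ℝ, 1 ≤ R →
      ((R/2) ^ p * (2 * (1/(100*R)))) ^ (1/p) ≤ C * ((2*R^2) ^ s * R) ^ ((1:ℝ)/2)) : False := by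
  have hp0 : (0:ℝ) < p := by linarith
  subst hs
  set B : ℝ := Real.log C + (1/2) * ((3/8 - 1/(2*p)) * Real.log 2) + Real.log 2 + (1/p) * Real.log 50 with hB
  set a : ℝ := 1/8 - 1/(2*p) with ha
  have ha0 : 0 < a := by
    rw [ha]
    have : 1/(2*p) < 1/8 := by
      rw [div_lt_div_iff₀ (by linarith) (by norm_num)]; linarith
    linarith
  have key : ∀ R : ℝ, 1 ≤ R → a * Real.log R ≤ B := by
    intro R hR
    have hR0 : (0:ℝ) < R := by linarith
    have H1 := H R hR
    have hpos1 : (0:ℝ) < R/2 := by positivity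
    have hpos2 : (0:ℝ) < 2*(1/(100*R)) := by positivity
    have hpos4 : (0:ℝ) < 2*R^2 := by positivity
    have hpos5 : (0:ℝ) < (R/2)^p := by positivity
    have hpos3 : (0:ℝ) < (2*R^2)^(3/8 - 1/(2*p)) * R := by positivity
    have hpos6 : (0:ℝ) < 50*R := by positivity
    have hpos7 : (0:ℝ) < ((2*R^2) ^ (3/8 - 1/(2*p)) * R) ^ ((1:ℝ)/2) := by positivity
    have hLpos : (0:ℝ) < ((R/2) ^ p * (2 * (1/(100*R)))) ^ (1/p) := by positivity
    have H2 := Real.log_le_log hLpos H1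
    rw [Real.log_rpow (by positivity), Real.log_mul hpos5.ne' hpos2.ne',
      Real.log_rpow hpos1,
      Real.log_mul hC.ne' hpos7.ne', Real.log_rpow hpos3,
      Real.log_mul (Real.rpow_pos_of_pos hpos4 _).ne' hR0.ne',
      Real.log_rpow hpos4] at H2
    rw [show (2:ℝ) * (1/(100*R)) = 1/(50*R) by ring] at H2
    rw [Real.log_div one_ne_zero hpos6.ne',
      Real.log_one, Real.log_mul (by norm_num : (50:ℝ) ≠ 0) hR0.ne',
      Real.log_div hR0.ne' (by norm_num : (2:ℝ) ≠ 0)] at H2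
    rw [show (2:ℝ) * R^2 = 2 * R^(2:ℕ) by norm_num,
      Real.log_mul (by norm_num) (by positivity : (0:ℝ) < R^(2:ℕ)).ne',
      Real.log_pow] at H2
    push_cast at H2
    rw [hB, ha]
    have H3 := mul_le_mul_of_nonneg_left H2 hp0.le
    have key2 : p * (Real.log C + 1/2*((3/8-1/(2*p))*(Real.log 2 + 2*Real.log R) + Real.log R))
          - p * (1/p * (p*(Real.log R - Real.log 2) + (0 - (Real.log 50 + Real.log R))))
        = p * (Real.log C + 1/2*((3/8-1/(2*p))*Real.log 2) + Real.log 2 + 1/p*Real.log 50)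
          - p * ((1/8-1/(2*p)) * Real.log R) := by
      field_simp
      ring
    have h6 : p * ((1/8-1/(2*p)) * Real.log R)
        ≤ p * (Real.log C + 1/2*((3/8-1/(2*p))*Real.log 2) + Real.log 2 + 1/p*Real.log 50) := by
      linarith [H3, key2]
    exact le_of_mul_le_mul_left h6 hp0
  clear_value B a
  set R : ℝ := Real.exp (max 0 (B/a) + 1) with hRdef
  have hmax := le_max_left 0 (B/a)
  have hmax2 := le_max_right 0 (B/a)
  have hR1 : 1 ≤ R := by
    calc (1:ℝ) = Real.exp 0 := Real.exp_zero.symm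
      _ ≤ R := Real.exp_le_exp.2 (by linarith)
  have h2 := key R hR1
  rw [hRdef, Real.log_exp] at h2
  have h4 : B ≤ a * max 0 (B/a) := by
    have h5 := mul_le_mul_of_nonneg_left hmax2 ha0.le
    have h6 : a * (B/a) = B := by field_simp
    linarith
  rw [mul_add, mul_one] at h2
  have h5 : a * (0 ⊔ B/a) + a ≤ a * (0 ⊔ B/a) := le_trans h2 h4
  linarith [h5, ha0]

end S13
end

open MeasureTheory

set_option maxHeartbeats 2000000 in
theorem stmt_13 (α p : ℝ) (hα : α ∈ Set.Ico (1/2 : ℝ) 1) (hp : 1 ≤ p)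
    (hmax : ∀ s : ℝ, 1/4 < s → ∃ C > 0, ∀ g : ℝ → ℂ, Integrable g →
      (∫ x in Metric.ball (0:ℝ) 1,
          (⨆ t : Set.Ioo (0:ℝ) 1,
            ‖∫ ξ, Complex.exp (Complex.I *
              (((x + (t:ℝ) ^ α) * ξ + (t:ℝ) * ξ ^ 2 : ℝ) : ℂ)) * g ξ‖) ^ p) ^ (1/p)
        ≤ C * (∫ ξ, (1 + ξ^2) ^ s * ‖g ξ‖^2) ^ ((1:ℝ)/2)) :
    p ≤ 4 := by
  by_contra hcon
  push_neg at hcon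
  have hp0 : (0:ℝ) < p := by linarith
  set s : ℝ := 3/8 - 1/(2*p) with hs
  have hs4 : 1/4 < s := by
    rw [hs]
    have : 1/(2*p) < 1/8 := by
      rw [div_lt_div_iff₀ (by linarith) (by norm_num)]; linarith
    linarith
  have hs0 : (0:ℝ) ≤ s := le_of_lt (lt_trans (by norm_num) hs4)
  obtain ⟨C, hC, hineq⟩ := hmax s hs4
  refine S13.final p s C hcon hs hC ?_
  intro R hR
  have hR0 : (0:ℝ) < R := by linarith
  haveI : Nonempty (Set.Ioo (0:ℝ) 1) := ⟨⟨1/2, by norm_num⟩⟩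
  -- the test function
  have hg : Integrable ((Set.Ioc (0:ℝ) R).indicator fun _ => (1:ℂ)) :=
    (integrable_indicator_iff measurableSet_Ioc).2
      (integrableOn_const (by simp [Real.volume_Ioc]))
  have main := hineq _ hg
  have hJeq : ∀ (x : ℝ) (t : Set.Ioo (0:ℝ) 1),
      (∫ ξ, Complex.exp (Complex.I * (((x + (t:ℝ) ^ α) * ξ + (t:ℝ) * ξ ^ 2 : ℝ) : ℂ)) *
        (Set.Ioc (0:ℝ) R).indicator (fun _ => (1:ℂ)) ξ) = S13.J R (x + (t:ℝ) ^ α) t :=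
    fun _ _ => rfl
  simp only [hJeq] at main
  have main' : (∫ x in Metric.ball (0:ℝ) 1,
      ((fun x => ⨆ t : Set.Ioo (0:ℝ) 1, ‖S13.J R (x + (t:ℝ) ^ α) t‖) x) ^ p) ^ (1/p)
      ≤ C * (∫ ξ, (1 + ξ^2) ^ s *
        ‖(Set.Ioc (0:ℝ) R).indicator (fun _ => (1:ℂ)) ξ‖^2) ^ ((1:ℝ)/2) := main
  set h : ℝ → ℝ := fun x => ⨆ t : Set.Ioo (0:ℝ) 1, ‖S13.J R (x + (t:ℝ) ^ α) t‖ with hhdef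
  -- basic properties of h
  have hmeas : Measurable h := S13.measurable_h R α hR0.le
  have hbdd : ∀ x : ℝ, BddAbove (Set.range fun t : Set.Ioo (0:ℝ) 1 =>
      ‖S13.J R (x + (t:ℝ) ^ α) t‖) := by
    intro x; refine ⟨R, ?_⟩; rintro y ⟨t, rfl⟩; exact S13.J_norm_le R _ t hR0.le
  have h0 : ∀ x, 0 ≤ h x := fun x => Real.iSup_nonneg fun t => norm_nonneg _
  have hup : ∀ x, h x ≤ R := fun x => ciSup_le fun t => S13.J_norm_le R _ t hR0.le
  have hsup : ∀ x : ℝ, (⨆ t : Set.Ioo (0:ℝ) 1, ‖S13.J R (x + (t:ℝ) ^ α) t‖) = h x :=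
    fun _ => rfl
  try simp only [hsup] at main'
  clear_value h
  clear main hJeq hmax hineq hg
  -- parameters
  set t₀ : ℝ := 1/(200*R^2) with ht₀def
  have ht₀pos : 0 < t₀ := by rw [ht₀def]; positivity
  have ht₀lt : t₀ < 1 := by
    rw [ht₀def, div_lt_one (by positivity)]; nlinarith
  set c : ℝ := t₀ ^ α with hcdef
  have hc0 : 0 < c := by rw [hcdef]; exact Real.rpow_pos_of_pos ht₀pos α
  have hc12 : c ≤ 1/2 := by
    have h1 : t₀ ≤ 1 := ht₀lt.le
    have h2 : c ≤ t₀ ^ ((1:ℝ)/2) :=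
      Real.rpow_le_rpow_of_exponent_ge ht₀pos h1 hα.1
    have h3 : t₀ ≤ 1/4 := by
      rw [ht₀def, div_le_div_iff₀ (by positivity) (by norm_num)]; nlinarith
    have h4 : t₀ ^ ((1:ℝ)/2) ≤ (1/4 : ℝ) ^ ((1:ℝ)/2) :=
      Real.rpow_le_rpow ht₀pos.le h3 (by norm_num)
    have h5 : ((1:ℝ)/4) ^ ((1:ℝ)/2) = 1/2 := by
      rw [show (1/4:ℝ) = (1/2)^(2:ℕ) by norm_num, ← Real.rpow_natCast ((1:ℝ)/2) 2,
        ← Real.rpow_mul (by norm_num)]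
      norm_num
    linarith
  set δ : ℝ := 1/(100*R) with hδdef
  have hδpos : 0 < δ := by rw [hδdef]; positivity
  have hδsmall : δ ≤ 1/100 := by
    rw [hδdef, div_le_div_iff₀ (by positivity) (by norm_num)]; nlinarith
  have hδR : δ * R = 1/100 := by rw [hδdef]; field_simp
  have ht₀R : t₀ * R ^ 2 = 1/200 := by rw [ht₀def]; field_simp
  clear_value t₀ c δ
  set S : Set ℝ := Set.Icc (-c - δ) (-c + δ) with hSdef
  have hSmeas : MeasurableSet S := by rw [hSdef]; exact measurableSet_Icc
  have hSmem : ∀ x, x ∈ S ↔ -c - δ ≤ x ∧ x ≤ -c + δ := by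
    intro x; rw [hSdef]; exact Set.mem_Icc
  have hvolS : (volume S).toReal = 2 * δ := by
    rw [hSdef, Real.volume_Icc, ENNReal.toReal_ofReal (by linarith)]
    ring
  have hvolSlt : volume S < ⊤ := by rw [hSdef, Real.volume_Icc]; exact ENNReal.ofReal_lt_top
  clear_value S
  have hSball : S ⊆ Metric.ball (0:ℝ) 1 := by
    intro x hx
    rw [Metric.mem_ball, Real.dist_eq, sub_zero, abs_lt]
    obtain ⟨hx1, hx2⟩ := (hSmem x).1 hx
    constructor <;> nlinarith
  -- phase bound
  have hphase : ∀ x ∈ S, ∀ ξ ∈ Set.Ioc (0:ℝ) R, |(x + c) * ξ + t₀ * ξ ^ 2| ≤ π / 3 := by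
    intro x hx ξ hξ
    obtain ⟨hx1, hx2⟩ := (hSmem x).1 hx
    obtain ⟨hξ1, hξ2⟩ := hξ
    have habs : |x + c| ≤ δ := abs_le.2 ⟨by linarith, by linarith⟩
    have h1 : |(x + c) * ξ + t₀ * ξ ^ 2| ≤ |x + c| * ξ + t₀ * ξ ^ 2 := by
      calc |(x + c) * ξ + t₀ * ξ ^ 2| ≤ |(x + c) * ξ| + |t₀ * ξ ^ 2| := abs_add_le _ _
        _ = |x + c| * ξ + t₀ * ξ ^ 2 := by
            rw [abs_mul, abs_of_pos hξ1, abs_of_pos (by positivity : (0:ℝ) < t₀ * ξ ^ 2)]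
    have h2 : |x + c| * ξ ≤ δ * R := by
      apply mul_le_mul habs hξ2 hξ1.le hδpos.le
    have h3 : t₀ * ξ ^ 2 ≤ t₀ * R ^ 2 := by
      apply mul_le_mul_of_nonneg_left _ ht₀pos.le
      nlinarith
    have h4 : δ * R = 1/100 := hδR
    have h5 : t₀ * R ^ 2 = 1/200 := ht₀R
    have hπ : (3:ℝ) ≤ π := Real.pi_gt_three.le
    calc |(x + c) * ξ + t₀ * ξ ^ 2| ≤ 1/100 + 1/200 := by
          linarith only [h1, h2, h3, h4, h5]
      _ ≤ π / 3 := by linarith only [hπ]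
  -- lower bound on S
  have hlow : ∀ x ∈ S, R / 2 ≤ h x := by
    intro x hx
    have h1 : R / 2 ≤ (S13.J R (x + c) t₀).re :=
      S13.J_re_ge R (x + c) t₀ hR0.le (hphase x hx)
    have h2 : (S13.J R (x + c) t₀).re ≤ ‖S13.J R (x + c) t₀‖ := by
      exact Complex.re_le_norm _
    have h3 : ‖S13.J R (x + c) t₀‖ ≤ h x := by
      rw [hcdef, hhdef]
      exact le_ciSup (hbdd x) (⟨t₀, ht₀pos, ht₀lt⟩ : Set.Ioo (0:ℝ) 1)
    linarith
  -- integrability of h^p on the ball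
  have hmeasp : Measurable fun x => h x ^ p := by fun_prop
  have hInt : IntegrableOn (fun x => h x ^ p) (Metric.ball (0:ℝ) 1) := by
    apply Integrable.mono' (g := fun _ => R ^ p)
      (integrableOn_const measure_ball_lt_top.ne)
      hmeasp.aestronglyMeasurable.restrict
    filter_upwards with x
    rw [Real.norm_eq_abs, _root_.abs_of_nonneg (Real.rpow_nonneg (h0 x) p)]
    exact Real.rpow_le_rpow (h0 x) (hup x) hp0.le
  -- lower bound of the integral
  have hI1 : (R/2) ^ p * (2 * δ) ≤ ∫ x in S, h x ^ p := by
    have := setIntegral_mono_on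
      (integrableOn_const hvolSlt.ne)
      (hInt.mono_set hSball) hSmeas
      (fun x hx => Real.rpow_le_rpow (by positivity) (hlow x hx) hp0.le)
    calc (R/2) ^ p * (2 * δ) = ∫ _x in S, (R/2 : ℝ) ^ p := by
          rw [setIntegral_const, smul_eq_mul, measureReal_def, hvolS]; ring
      _ ≤ ∫ x in S, h x ^ p := this
  have hI2 : ∫ x in S, h x ^ p ≤ ∫ x in Metric.ball (0:ℝ) 1, h x ^ p := by
    apply setIntegral_mono_set hInt
      (Filter.Eventually.of_forall fun x => Real.rpow_nonneg (h0 x) p)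
      (HasSubset.Subset.eventuallyLE hSball)
  -- upper bound of the RHS integral
  have hgval : (∫ ξ, (1 + ξ^2) ^ s * ‖(Set.Ioc (0:ℝ) R).indicator (fun _ => (1:ℂ)) ξ‖^2)
      = ∫ ξ in Set.Ioc (0:ℝ) R, (1 + ξ^2) ^ s := by
    rw [← integral_indicator measurableSet_Ioc]
    congr 1; ext ξ
    by_cases hm : ξ ∈ Set.Ioc (0:ℝ) R <;> simp [hm]
  have hIs : IntegrableOn (fun ξ : ℝ => (1 + ξ^2) ^ s) (Set.Ioc (0:ℝ) R) := by
    apply Continuous.integrableOn_Ioc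
    apply Continuous.rpow_const (by fun_prop)
    intro x; exact Or.inl (by positivity)
  have hI3 : ∫ ξ in Set.Ioc (0:ℝ) R, (1 + ξ^2) ^ s ≤ (2*R^2) ^ s * R := by
    have hb : ∀ ξ ∈ Set.Ioc (0:ℝ) R, (1 + ξ^2) ^ s ≤ (2*R^2) ^ s := by
      intro ξ hξ
      apply Real.rpow_le_rpow (by positivity) (by nlinarith [hξ.1, hξ.2]) hs0
    calc ∫ ξ in Set.Ioc (0:ℝ) R, (1 + ξ^2) ^ s
        ≤ ∫ _ξ in Set.Ioc (0:ℝ) R, ((2*R^2) ^ s : ℝ) :=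
          setIntegral_mono_on hIs
            (integrableOn_const (by simp [Real.volume_Ioc])) measurableSet_Ioc hb
      _ = (2*R^2) ^ s * R := by
          rw [setIntegral_const, smul_eq_mul, measureReal_def, Real.volume_Ioc,
            ENNReal.toReal_ofReal (by linarith)]
          ring
  -- put everything together
  have hIRnn : 0 ≤ ∫ ξ in Set.Ioc (0:ℝ) R, (1 + ξ^2) ^ s :=
    setIntegral_nonneg measurableSet_Ioc fun ξ _ => Real.rpow_nonneg (by positivity) s
  calc ((R/2) ^ p * (2 * δ)) ^ (1/p)
      ≤ (∫ x in Metric.ball (0:ℝ) 1, h x ^ p) ^ (1/p) := by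
        apply Real.rpow_le_rpow (by positivity) (by linarith [hI1, hI2]) (by positivity)
    _ ≤ C * (∫ ξ, (1 + ξ^2) ^ s * ‖(Set.Ioc (0:ℝ) R).indicator (fun _ => (1:ℂ)) ξ‖^2) ^ ((1:ℝ)/2) := main'
    _ ≤ C * ((2*R^2) ^ s * R) ^ ((1:ℝ)/2) := by
        apply mul_le_mul_of_nonneg_left _ hC.le
        apply Real.rpow_le_rpow (by rw [hgval]; exact hIRnn) (by rw [hgval]; exact hI3)
          (by norm_num)
end
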